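/- Let E be a row-finite directed graph and H ⊆ E⁰ a hereditary, saturated subset. If both E_H and E \ H have distinct detours, then E has distinct detours. -/

import Mathlib

structure DirGraph where
  V : Type
  E : Type
  r : E → V
  s : E → V

namespace DirGraph
variable (G : DirGraph)

/-- A vertex is a source if no edge has it as range. -/
def IsSource (v : G.V) : Prop := ∀ e : G.E, G.r e ≠ v

/-- Finite directed paths, written right to left: `DPath G a b` is a path with
source `a` and range `b`; `cons e p` prepends the edge `e` at the range side. -/
inductive DPath : G.V → G.V → Type
  | nil (v : G.V) : DPath v v
  | cons (e : G.E) {a : G.V} (p : DPath a (G.s e)) : DPath a (G.r e)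

variable {G}

def DPath.length : {a b : G.V} → DPath G a b → ℕ
  | _, _, .nil _ => 0
  | _, _, .cons _ p => p.length + 1

/-- The list of vertices along a finite path (range first). -/
def DPath.vertices : {a b : G.V} → DPath G a b → List G.V
  | _, _, .nil v => [v]
  | _, _, .cons e p => G.r e :: p.vertices

/-- The list of edges of a finite path (range-side edge first). -/
def DPath.edges : {a b : G.V} → DPath G a b → List G.E
  | _, _, .nil _ => []
  | _, _, .cons e p => e :: p.edges

/-- A path is simple if no vertex repeats. -/
def DPath.Simple {a b : G.V} (p : DPath G a b) : Prop := p.vertices.Nodup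

/-- Infinite backwards paths `μ₁μ₂μ₃⋯` with `s (μ n) = r (μ (n+1))`. -/
structure InfPath (G : DirGraph) where
  edge : ℕ → G.E
  adj : ∀ n, G.s (edge n) = G.r (edge (n + 1))

def InfPath.range (μ : InfPath G) : G.V := G.r (μ.edge 0)
def InfPath.vertexSet (μ : InfPath G) : Set G.V := Set.range fun n => G.r (μ.edge n)
def InfPath.edgeSet (μ : InfPath G) : Set G.E := Set.range μ.edge
def InfPath.Simple (μ : InfPath G) : Prop := Function.Injective fun n => G.r (μ.edge n)

/-- A distinct detour for a finite path: a finite path with source and range on the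
given path, containing an edge not on it. -/
def DPath.HasDistinctDetour {a b : G.V} (μ : DPath G a b) : Prop :=
  ∃ (c d : G.V) (ν : DPath G c d), c ∈ μ.vertices ∧ d ∈ μ.vertices ∧
    ∃ e ∈ ν.edges, e ∉ μ.edges

/-- A distinct detour for an infinite path. -/
def InfPath.HasDistinctDetour (μ : InfPath G) : Prop :=
  ∃ (c d : G.V) (ν : DPath G c d), c ∈ μ.vertexSet ∧ d ∈ μ.vertexSet ∧
    ∃ e ∈ ν.edges, e ∉ μ.edgeSet

variable (G)

/-- `E` has distinct detours: every simple path in `E^{≤∞}` (finite paths starting at a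
source, or infinite backwards paths) admits a distinct detour. -/
def HasDistinctDetours : Prop :=
  (∀ (a b : G.V) (μ : DPath G a b), G.IsSource a → μ.Simple → μ.HasDistinctDetour) ∧
  (∀ μ : InfPath G, μ.Simple → μ.HasDistinctDetour)

/-- `E` has no cycles: there are no nontrivial finite paths from a vertex to itself. -/
def NoCycles : Prop := ∀ (v : G.V) (p : DPath G v v), p.length = 0

def RowFinite : Prop := ∀ v : G.V, {e : G.E | G.r e = v}.Finite

/-- `H` is hereditary: any vertex with a path to a vertex of `H` lies in `H`. -/
def Hereditary (H : Set G.V) : Prop := ∀ (a b : G.V), DPath G a b → b ∈ H → a ∈ H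

/-- `H` is saturated: a vertex receiving at least one edge, all of whose incoming
edges have source in `H`, lies in `H`. -/
def Saturated (H : Set G.V) : Prop :=
  ∀ v : G.V, (∃ e, G.r e = v) → (∀ e, G.r e = v → G.s e ∈ H) → v ∈ H

/-- The restriction graph `E_H`: vertices `H`, edges with range in `H`. -/
def restrict (H : Set G.V) (hH : G.Hereditary H) : DirGraph where
  V := {v : G.V // v ∈ H}
  E := {e : G.E // G.r e ∈ H}
  r := fun e => ⟨G.r e.1, e.2⟩
  s := fun e => ⟨G.s e.1, hH _ _ (.cons e.1 (.nil _)) e.2⟩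

/-- The quotient graph `E \ H`: vertices `E⁰ \ H`, edges with source outside `H`. -/
def quotientGraph (H : Set G.V) (hH : G.Hereditary H) : DirGraph where
  V := {v : G.V // v ∉ H}
  E := {e : G.E // G.s e ∉ H}
  r := fun e => ⟨G.r e.1, fun hr => e.2 (hH _ _ (.cons e.1 (.nil _)) hr)⟩
  s := fun e => ⟨G.s e.1, e.2⟩

end DirGraph


namespace DirGraph

variable {G : DirGraph} {H : Set G.V}

lemma DPath.range_mem_vertices : ∀ {a b : G.V} (p : DPath G a b), b ∈ p.vertices
  | _, _, .nil v => by simp [vertices]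
  | _, _, .cons e p => by simp [vertices]

lemma DPath.source_mem_vertices : ∀ {a b : G.V} (p : DPath G a b), a ∈ p.vertices
  | _, _, .nil v => by simp [vertices]
  | _, _, .cons e p => by
      simp only [vertices, List.mem_cons]
      exact Or.inr p.source_mem_vertices

lemma DPath.s_mem_of_mem_edges : ∀ {a b : G.V} (p : DPath G a b) {e : G.E},
    e ∈ p.edges → G.s e ∈ p.vertices
  | _, _, .nil v, e, h => by simp [edges] at h
  | _, _, .cons f p, e, h => by
      simp only [edges, List.mem_cons] at h
      simp only [vertices, List.mem_cons]
      rcases h with rfl | h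
      · exact Or.inr p.range_mem_vertices
      · exact Or.inr (p.s_mem_of_mem_edges h)

lemma DPath.r_mem_of_mem_edges : ∀ {a b : G.V} (p : DPath G a b) {e : G.E},
    e ∈ p.edges → G.r e ∈ p.vertices
  | _, _, .nil v, e, h => by simp [edges] at h
  | _, _, .cons f p, e, h => by
      simp only [edges, List.mem_cons] at h
      simp only [vertices, List.mem_cons]
      rcases h with rfl | h
      · exact Or.inl rfl
      · exact Or.inr (p.r_mem_of_mem_edges h)

/-- If the range of a path lies in a hereditary set, every vertex of the path does. -/
lemma DPath.mem_of_range_mem (hher : G.Hereditary H) :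
    ∀ {a b : G.V} (p : DPath G a b), b ∈ H → ∀ v ∈ p.vertices, v ∈ H
  | _, _, .nil w, hb, v, hv => by
      simp only [vertices, List.mem_singleton] at hv
      exact hv ▸ hb
  | _, _, .cons e p, hb, v, hv => by
      simp only [vertices, List.mem_cons] at hv
      rcases hv with rfl | hv
      · exact hb
      · exact p.mem_of_range_mem hher (hher _ _ (.cons e (.nil _)) hb) v hv

/-- If some vertex of a path lies in a hereditary set, the source does. -/
lemma DPath.source_mem_H (hher : G.Hereditary H) :
    ∀ {a b : G.V} (p : DPath G a b) {v : G.V}, v ∈ p.vertices → v ∈ H → a ∈ H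
  | _, _, .nil w, v, hv, hvH => by
      simp only [vertices, List.mem_singleton] at hv; exact hv ▸ hvH
  | _, _, .cons e p, v, hv, hvH => by
      simp only [vertices, List.mem_cons] at hv
      rcases hv with rfl | hv
      · exact hher _ _ (.cons e p) hvH
      · exact p.source_mem_H hher hv hvH

/-- Push a path with range in `H` into the restriction graph. -/
def DPath.toRestrict (hher : G.Hereditary H) :
    ∀ {a b : G.V} (p : DPath G a b) (ha : a ∈ H) (hb : b ∈ H),
      DPath (G.restrict H hher) (Subtype.mk a ha) (Subtype.mk b hb)
  | _, _, .nil v, ha, _ => DPath.nil (G := G.restrict H hher) ⟨v, ha⟩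
  | _, _, .cons e p, ha, hb =>
      DPath.cons (G := G.restrict H hher) ⟨e, hb⟩
        (p.toRestrict hher ha (hher _ _ (.cons e (.nil _)) hb))

lemma DPath.vertices_toRestrict (hher : G.Hereditary H) :
    ∀ {a b : G.V} (p : DPath G a b) (ha : a ∈ H) (hb : b ∈ H),
      (p.toRestrict hher ha hb).vertices.map Subtype.val = p.vertices
  | _, _, .nil v, _, _ => rfl
  | _, _, .cons e p, ha, hb => by
      simp only [toRestrict, vertices, List.map_cons]
      exact congrArg (G.r e :: ·) (p.vertices_toRestrict hher _ _)

lemma DPath.edges_toRestrict (hher : G.Hereditary H) :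
    ∀ {a b : G.V} (p : DPath G a b) (ha : a ∈ H) (hb : b ∈ H),
      (p.toRestrict hher ha hb).edges.map Subtype.val = p.edges
  | _, _, .nil v, _, _ => rfl
  | _, _, .cons e p, ha, hb => by
      simp only [toRestrict, edges, List.map_cons]
      exact congrArg (e :: ·) (p.edges_toRestrict hher _ _)

/-- Push a path all of whose edges have source outside `H` into the quotient graph. -/
def DPath.toQuotient (hher : G.Hereditary H) :
    ∀ {a b : G.V} (p : DPath G a b) (ha : a ∉ H) (hb : b ∉ H)
      (he : ∀ e ∈ p.edges, G.s e ∉ H),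
      DPath (G.quotientGraph H hher) (Subtype.mk a ha) (Subtype.mk b hb)
  | _, _, .nil v, ha, _, _ => DPath.nil (G := G.quotientGraph H hher) ⟨v, ha⟩
  | _, _, .cons e p, ha, hb, he =>
      DPath.cons (G := G.quotientGraph H hher) ⟨e, he e (by simp [edges])⟩
        (p.toQuotient hher ha (he e (by simp [edges]))
          (fun f hf => he f (by simp only [edges, List.mem_cons]; exact Or.inr hf)))

lemma DPath.vertices_toQuotient (hher : G.Hereditary H) :
    ∀ {a b : G.V} (p : DPath G a b) (ha : a ∉ H) (hb : b ∉ H)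
      (he : ∀ e ∈ p.edges, G.s e ∉ H),
      (p.toQuotient hher ha hb he).vertices.map Subtype.val = p.vertices
  | _, _, .nil v, _, _, _ => rfl
  | _, _, .cons e p, ha, hb, he => by
      simp only [toQuotient, vertices, List.map_cons]
      exact congrArg (G.r e :: ·) (p.vertices_toQuotient hher _ _ _)

lemma DPath.edges_toQuotient (hher : G.Hereditary H) :
    ∀ {a b : G.V} (p : DPath G a b) (ha : a ∉ H) (hb : b ∉ H)
      (he : ∀ e ∈ p.edges, G.s e ∉ H),
      (p.toQuotient hher ha hb he).edges.map Subtype.val = p.edges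
  | _, _, .nil v, _, _, _ => rfl
  | _, _, .cons e p, ha, hb, he => by
      simp only [toQuotient, edges, List.map_cons]
      exact congrArg (e :: ·) (p.edges_toQuotient hher _ _ _)

/-- Lift a path in the restriction graph back to `G`. -/
def DPath.liftRestrict {hher : G.Hereditary H} :
    ∀ {a b : (G.restrict H hher).V}, DPath (G.restrict H hher) a b → DPath G a.1 b.1
  | _, _, .nil v => .nil v.1
  | _, _, .cons e p => .cons e.1 p.liftRestrict

lemma DPath.edges_liftRestrict {hher : G.Hereditary H} :
    ∀ {a b : (G.restrict H hher).V} (p : DPath (G.restrict H hher) a b),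
      p.liftRestrict.edges = p.edges.map Subtype.val
  | _, _, .nil v => rfl
  | _, _, .cons e p => by
      simp only [liftRestrict, edges, List.map_cons]
      exact congrArg (e.1 :: ·) p.edges_liftRestrict

/-- Lift a path in the quotient graph back to `G`. -/
def DPath.liftQuotient {hher : G.Hereditary H} :
    ∀ {a b : (G.quotientGraph H hher).V}, DPath (G.quotientGraph H hher) a b → DPath G a.1 b.1
  | _, _, .nil v => .nil v.1
  | _, _, .cons e p => .cons e.1 p.liftQuotient

lemma DPath.edges_liftQuotient {hher : G.Hereditary H} :
    ∀ {a b : (G.quotientGraph H hher).V} (p : DPath (G.quotientGraph H hher) a b),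
      p.liftQuotient.edges = p.edges.map Subtype.val
  | _, _, .nil v => rfl
  | _, _, .cons e p => by
      simp only [liftQuotient, edges, List.map_cons]
      exact congrArg (e.1 :: ·) p.edges_liftQuotient

/-- Extract the source-side prefix of a path lying in the hereditary set `H`,
capturing every edge of the path whose range lies in `H`. -/
lemma DPath.takeH (hher : G.Hereditary H) :
    ∀ {a b : G.V} (p : DPath G a b), a ∈ H → b ∉ H →
      ∃ (c : G.V) (_ : c ∈ H) (q : DPath G a c),
        q.vertices.Sublist p.vertices ∧ ∀ e ∈ p.edges, G.r e ∈ H → e ∈ q.edges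
  | _, _, .nil v, ha, hb => absurd ha hb
  | _, _, .cons e p, ha, hb => by
      by_cases hs : G.s e ∈ H
      · refine ⟨G.s e, hs, p, ?_, ?_⟩
        · simp only [vertices]
          exact (List.sublist_cons_self _ _)
        · intro f hf hrf
          simp only [edges, List.mem_cons] at hf
          rcases hf with rfl | hf
          · exact absurd hrf hb
          · exact hf
      · obtain ⟨c, hc, q, hsub, hcap⟩ := p.takeH hher ha hs
        refine ⟨c, hc, q, ?_, ?_⟩
        · simp only [vertices]
          exact hsub.trans (List.sublist_cons_self _ _)
        · intro f hf hrf
          simp only [edges, List.mem_cons] at hf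
          rcases hf with rfl | hf
          · exact absurd hrf hb
          · exact hcap f hf hrf

def InfPath.shift (μ : InfPath G) (m : ℕ) : InfPath G where
  edge n := μ.edge (m + n)
  adj n := μ.adj (m + n)

def InfPath.toRestrict (hher : G.Hereditary H) (μ : InfPath G)
    (h : ∀ n, G.r (μ.edge n) ∈ H) : InfPath (G.restrict H hher) where
  edge n := ⟨μ.edge n, h n⟩
  adj n := Subtype.ext (μ.adj n)

def InfPath.toQuotient (hher : G.Hereditary H) (μ : InfPath G)
    (h : ∀ n, G.s (μ.edge n) ∉ H) : InfPath (G.quotientGraph H hher) where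
  edge n := ⟨μ.edge n, h n⟩
  adj n := Subtype.ext (μ.adj n)

end DirGraph

open DirGraph in
/-- if `H` is hereditary and saturated in a row-finite graph `E`, and both
`E_H` and `E \ H` have distinct detours, then so does `E`. -/
theorem hasDistinctDetours_of_restrict_quotient (G : DirGraph) (hrow : G.RowFinite)
    (H : Set G.V) (hher : G.Hereditary H) (hsat : G.Saturated H)
    (h1 : (G.restrict H hher).HasDistinctDetours)
    (h2 : (G.quotientGraph H hher).HasDistinctDetours) :
    G.HasDistinctDetours := by
  classical
  constructor
  · -- finite paths from a source
    intro a b μ hsrc hsimp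
    by_cases hex : ∃ v ∈ μ.vertices, v ∈ H
    · -- the path meets H; its H-part is a source-side prefix
      obtain ⟨v, hv, hvH⟩ := hex
      have ha : a ∈ H := μ.source_mem_H hher hv hvH
      have key : ∃ (c : G.V) (_ : c ∈ H) (q : DPath G a c),
          q.vertices.Sublist μ.vertices ∧ ∀ e ∈ μ.edges, G.r e ∈ H → e ∈ q.edges := by
        by_cases hb : b ∈ H
        · exact ⟨b, hb, μ, List.Sublist.refl _, fun e he _ => he⟩
        · exact μ.takeH hher ha hb
      obtain ⟨c, hcH, q, hsub, hcap⟩ := key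
      set ρ := q.toRestrict hher ha hcH with hρ
      have hsimp' : ρ.Simple := by
        have h1' : (ρ.vertices.map Subtype.val).Nodup := by
          rw [DPath.vertices_toRestrict]
          exact hsub.nodup hsimp
        exact h1'.of_map _
      have hsrc' : (G.restrict H hher).IsSource ⟨a, ha⟩ := fun f hf =>
        hsrc f.1 (congrArg Subtype.val hf)
      obtain ⟨c', d', ν, hc', hd', f, hfmem, hfnot⟩ := h1.1 _ _ ρ hsrc' hsimp'
      refine ⟨c'.1, d'.1, ν.liftRestrict, ?_, ?_, f.1, ?_, ?_⟩
      · exact hsub.subset (by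
          rw [← DPath.vertices_toRestrict hher q ha hcH]
          exact List.mem_map_of_mem hc')
      · exact hsub.subset (by
          rw [← DPath.vertices_toRestrict hher q ha hcH]
          exact List.mem_map_of_mem hd')
      · rw [DPath.edges_liftRestrict]
        exact List.mem_map_of_mem hfmem
      · intro hmem
        have hq : f.1 ∈ q.edges := hcap f.1 hmem f.2
        rw [← DPath.edges_toRestrict hher q ha hcH] at hq
        obtain ⟨f', hf', hval⟩ := List.mem_map.mp hq
        exact hfnot ((Subtype.ext hval : f' = f) ▸ hf')
    · -- the path avoids H: work in the quotient graph
      push_neg at hex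
      have ha : a ∉ H := hex a μ.source_mem_vertices
      have hb : b ∉ H := hex b μ.range_mem_vertices
      have he : ∀ e ∈ μ.edges, G.s e ∉ H := fun e he =>
        hex _ (μ.s_mem_of_mem_edges he)
      set ρ := μ.toQuotient hher ha hb he with hρ
      have hsimp' : ρ.Simple := by
        have h1' : (ρ.vertices.map Subtype.val).Nodup := by
          rw [DPath.vertices_toQuotient]
          exact hsimp
        exact h1'.of_map _
      have hsrc' : (G.quotientGraph H hher).IsSource ⟨a, ha⟩ := fun f hf =>
        hsrc f.1 (congrArg Subtype.val hf)
      obtain ⟨c', d', ν, hc', hd', f, hfmem, hfnot⟩ := h2.1 _ _ ρ hsrc' hsimp'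
      refine ⟨c'.1, d'.1, ν.liftQuotient, ?_, ?_, f.1, ?_, ?_⟩
      · rw [← DPath.vertices_toQuotient hher μ ha hb he]
        exact List.mem_map_of_mem hc'
      · rw [← DPath.vertices_toQuotient hher μ ha hb he]
        exact List.mem_map_of_mem hd'
      · rw [DPath.edges_liftQuotient]
        exact List.mem_map_of_mem hfmem
      · intro hmem
        rw [← DPath.edges_toQuotient hher μ ha hb he] at hmem
        obtain ⟨f', hf', hval⟩ := List.mem_map.mp hmem
        exact hfnot ((Subtype.ext hval : f' = f) ▸ hf')
  · -- infinite paths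
    intro μ hsimp
    by_cases hex : ∃ m, G.r (μ.edge m) ∈ H
    · -- the path meets H: a tail lies in H
      set m := Nat.find hex with hm
      have hspec : G.r (μ.edge m) ∈ H := Nat.find_spec hex
      set tail := μ.shift m with htail
      have hH : ∀ n, G.r (tail.edge n) ∈ H := by
        intro n
        induction n with
        | zero => exact hspec
        | succ n ih =>
            have h' : G.s (μ.edge (m + n)) ∈ H :=
              hher _ _ (.cons (μ.edge (m + n)) (.nil _)) ih
            exact (μ.adj (m + n)) ▸ h'
      set ρ := tail.toRestrict hher hH with hρ
      have hsimp' : ρ.Simple := by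
        intro i j hij
        have h' : G.r (μ.edge (m + i)) = G.r (μ.edge (m + j)) :=
          congrArg Subtype.val hij
        have := hsimp h'
        omega
      obtain ⟨c', d', ν, hc', hd', f, hfmem, hfnot⟩ := h1.2 ρ hsimp'
      refine ⟨c'.1, d'.1, ν.liftRestrict, ?_, ?_, f.1, ?_, ?_⟩
      · obtain ⟨n, hn⟩ := hc'
        exact ⟨m + n, congrArg Subtype.val hn⟩
      · obtain ⟨n, hn⟩ := hd'
        exact ⟨m + n, congrArg Subtype.val hn⟩
      · rw [DPath.edges_liftRestrict]
        exact List.mem_map_of_mem hfmem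
      · rintro ⟨k, hk⟩
        have hrk : G.r (μ.edge k) ∈ H := by rw [hk]; exact f.2
        have hmk : m ≤ k := le_of_not_gt fun hlt => Nat.find_min hex hlt hrk
        exact hfnot ⟨k - m, Subtype.ext (by
          show μ.edge (m + (k - m)) = f.1
          rw [Nat.add_sub_cancel' hmk]; exact hk)⟩
    · -- the path avoids H: work in the quotient graph
      push_neg at hex
      have hs : ∀ n, G.s (μ.edge n) ∉ H := fun n => (μ.adj n) ▸ hex (n + 1)
      set ρ := μ.toQuotient hher hs with hρ
      have hsimp' : ρ.Simple := fun i j hij => hsimp (congrArg Subtype.val hij)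
      obtain ⟨c', d', ν, hc', hd', f, hfmem, hfnot⟩ := h2.2 ρ hsimp'
      refine ⟨c'.1, d'.1, ν.liftQuotient, ?_, ?_, f.1, ?_, ?_⟩
      · obtain ⟨n, hn⟩ := hc'
        exact ⟨n, congrArg Subtype.val hn⟩
      · obtain ⟨n, hn⟩ := hd'
        exact ⟨n, congrArg Subtype.val hn⟩
      · rw [DPath.edges_liftQuotient]
        exact List.mem_map_of_mem hfmem
      · rintro ⟨k, hk⟩
        exact hfnot ⟨k, Subtype.ext hk⟩
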